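/- Let V be a finite type and E : Fin m → Sym2 V a multigraph on V. Define the GF(2)-linear map F : (V → ZMod 2) → (Fin m → ZMod 2) whose e-th coordinate at P equals P v if E e is a loop at v, and equals P u + P v if E e = s(u,v) with u ≠ v. Then F is injective if and only if G is decodable, i.e., every vertex of V is connected in G to some vertex at which there is a loop. -/
import Mathlib


/-- `e` is a loop index at vertex `v`. -/
def IsLoopIdx {V : Type*} {m : ℕ} (E : Fin m → Sym2 V) (v : V) (e : Fin m) : Prop :=
  E e = Sym2.diag v

/-- `u` and `v` are connected in the multigraph `E` with the edge indices in `S` deleted. -/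
def ConnectedMod {V : Type*} {m : ℕ} (E : Fin m → Sym2 V) (S : Finset (Fin m))
    (u v : V) : Prop :=
  Relation.EqvGen (fun a b => ∃ e : Fin m, e ∉ S ∧ E e = s(a, b)) u v

/-- `G − S` is decodable: every vertex is connected in `G − S` to a vertex with a loop
outside `S`. -/
def DecodableMod {V : Type*} {m : ℕ} (E : Fin m → Sym2 V) (S : Finset (Fin m)) : Prop :=
  ∀ u : V, ∃ v : V, (∃ e : Fin m, e ∉ S ∧ IsLoopIdx E v e) ∧ ConnectedMod E S u v

def IsDecodable {V : Type*} {m : ℕ} (E : Fin m → Sym2 V) : Prop :=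
  DecodableMod E ∅

/-- `c_x^G`: the number of `x`-element sets of edge indices whose deletion leaves a
decodable graph. -/
noncomputable def cG {V : Type*} {m : ℕ} (E : Fin m → Sym2 V) (x : ℕ) : ℕ :=
  Set.ncard {S : Finset (Fin m) | S.card = x ∧ DecodableMod E S}

/-- `k_x^G = C(m,x) − c_x^G`. -/
noncomputable def kG {V : Type*} {m : ℕ} (E : Fin m → Sym2 V) (x : ℕ) : ℕ :=
  Nat.choose m x - cG E x

/-- `m(G)`: the minimum cardinality of a loop cut. -/
noncomputable def mCut {V : Type*} {m : ℕ} (E : Fin m → Sym2 V) : ℕ :=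
  sInf {k : ℕ | ∃ S : Finset (Fin m), S.card = k ∧ ¬ DecodableMod E S}

/-- incidence degree of `v` (a loop at `v` counts once). -/
noncomputable def dI {V : Type*} {m : ℕ} (E : Fin m → Sym2 V) (v : V) : ℕ :=
  Set.ncard {e : Fin m | v ∈ E e}

/-- `δ_I(G)`: the minimum incidence degree. -/
noncomputable def deltaI {V : Type*} {m : ℕ} (E : Fin m → Sym2 V) : ℕ :=
  sInf (Set.range (dI E))

/-- `L_G`: the number of loop indices. -/
noncomputable def LG {V : Type*} {m : ℕ} (E : Fin m → Sym2 V) : ℕ :=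
  Set.ncard {e : Fin m | ∃ v : V, E e = Sym2.diag v}

/-- `δ_ℓ(v)`: the number of loop indices at `v`. -/
noncomputable def loopsAt {V : Type*} {m : ℕ} (E : Fin m → Sym2 V) (v : V) : ℕ :=
  Set.ncard {e : Fin m | E e = Sym2.diag v}

/-- `Δ_ℓ(G)`: the maximum number of loops at a single vertex. -/
noncomputable def DeltaLoops {V : Type*} {m : ℕ} (E : Fin m → Sym2 V) : ℕ :=
  sSup (Set.range (loopsAt E))

/-- `κ_G`: the edge connectivity. -/
noncomputable def kappaG {V : Type*} {m : ℕ} (E : Fin m → Sym2 V) : ℕ :=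
  sInf {k : ℕ | ∃ S : Finset (Fin m), S.card = k ∧ ∃ u v : V, ¬ ConnectedMod E S u v}

open Classical in
/-- The GF(2)-linear encoding map: the `e`-th coordinate of `F P` is `P v` if `E e` is a
loop at `v`, and `P u + P v` if `E e = s(u,v)` with `u ≠ v`. -/
noncomputable def encMap {V : Type*} {m : ℕ} (E : Fin m → Sym2 V)
    (P : V → ZMod 2) (e : Fin m) : ZMod 2 :=
  Sym2.lift ⟨fun a b => if a = b then P a else P a + P b, fun a b => by
    by_cases h : a = b
    · subst h; simp
    · simp [h, Ne.symm h, add_comm]⟩ (E e)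

lemma encMap_loop {V : Type*} {m : ℕ} (E : Fin m → Sym2 V) (P : V → ZMod 2)
    {e : Fin m} {a : V} (h : E e = s(a, a)) : encMap E P e = P a := by
  simp [encMap, h]

lemma encMap_ne {V : Type*} {m : ℕ} (E : Fin m → Sym2 V) (P : V → ZMod 2)
    {e : Fin m} {a b : V} (h : E e = s(a, b)) (hab : a ≠ b) :
    encMap E P e = P a + P b := by
  simp [encMap, h, hab]

theorem stmt0 {V : Type*} [Fintype V] {m : ℕ} (E : Fin m → Sym2 V) :
    Function.Injective (encMap E) ↔ IsDecodable E := by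
  constructor
  · intro hinj u
    by_contra hu
    push_neg at hu
    classical
    set P : V → ZMod 2 := fun v => if ConnectedMod E (∅ : Finset (Fin m)) u v then 1 else 0
      with hPdef
    have hP0 : encMap E P = encMap E 0 := by
      funext e
      obtain ⟨⟨a, b⟩, h⟩ := Quot.exists_rep (E e)
      have h' : E e = s(a, b) := h.symm
      by_cases hab : a = b
      · subst hab
        rw [encMap_loop E P h', encMap_loop E 0 h']
        have hna : ¬ ConnectedMod E (∅ : Finset (Fin m)) u a :=
          hu a ⟨e, by simp, h'⟩
        simp [hPdef, hna]
      · rw [encMap_ne E P h' hab, encMap_ne E 0 h' hab]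
        have hcon : ConnectedMod E (∅ : Finset (Fin m)) u a ↔
            ConnectedMod E (∅ : Finset (Fin m)) u b := by
          constructor <;> intro hc
          · exact Relation.EqvGen.trans _ _ _ hc
              (Relation.EqvGen.rel _ _ ⟨e, by simp, h'⟩)
          · exact Relation.EqvGen.trans _ _ _ hc
              (Relation.EqvGen.symm _ _ (Relation.EqvGen.rel _ _ ⟨e, by simp, h'⟩))
        by_cases hca : ConnectedMod E (∅ : Finset (Fin m)) u a
        · have hcb := hcon.mp hca
          simp [hPdef, hca, hcb]
          decide
        · have hcb : ¬ ConnectedMod E (∅ : Finset (Fin m)) u b := fun h => hca (hcon.mpr h)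
          simp [hPdef, hca, hcb]
    have hPz := hinj hP0
    have hPu : P u = 1 := by
      simp [hPdef, show ConnectedMod E (∅ : Finset (Fin m)) u u from
        Relation.EqvGen.refl u]
    rw [hPz] at hPu
    simp at hPu
  · intro hdec P Q hPQ
    funext w
    obtain ⟨v, ⟨e0, -, hloop⟩, hconn⟩ := hdec w
    have key : ∀ x y : V, ConnectedMod E (∅ : Finset (Fin m)) x y →
        P x + Q x = P y + Q y := by
      intro x y hxy
      induction hxy with
      | rel a b h =>
        obtain ⟨e, -, he⟩ := h
        by_cases hab : a = b
        · subst hab; rfl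
        · have h1 := congrFun hPQ e
          rw [encMap_ne E P he hab, encMap_ne E Q he hab] at h1
          revert h1
          generalize P a = pa; generalize P b = pb
          generalize Q a = qa; generalize Q b = qb
          revert pa pb qa qb; decide
      | refl a => rfl
      | symm a b _ ih => exact ih.symm
      | trans a b c _ _ ih1 ih2 => exact ih1.trans ih2
    have hPv : P v = Q v := by
      have h1 := congrFun hPQ e0
      rwa [encMap_loop E P hloop, encMap_loop E Q hloop] at h1
    have hD : P w + Q w = P v + Q v := key _ _ hconn
    rw [hPv] at hD
    revert hD
    generalize P w = pw; generalize Q w = qw; generalize Q v = qv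
    revert pw qw qv; decide
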